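/- Let (u₁, …, uₙ) be a basis of ℝⁿ. Then there exists u ∈ ℝⁿ such that the additive subgroup ℤu₁ + ℤu₂ + ⋯ + ℤuₙ + ℤu is dense in ℝⁿ. -/

import Mathlib

open Module Filter Topology Submodule Polynomial

lemma aux_line {E : Type*} [NormedAddCommGroup E] [NormedSpace ℝ E] [FiniteDimensional ℝ E]
    (H : AddSubgroup E) (hc : IsClosed (H : Set E))
    (hnd : ∀ ε > (0:ℝ), ∃ h ∈ H, h ≠ 0 ∧ ‖h‖ < ε) :
    ∃ e : E, ‖e‖ = 1 ∧ ∀ t : ℝ, t • e ∈ H := by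
  have hx : ∀ k : ℕ, ∃ h ∈ H, h ≠ 0 ∧ ‖h‖ < 1 / (k + 1) := fun k =>
    hnd (1 / (k + 1)) (by positivity)
  choose x hxH hx0 hxs using hx
  set u : ℕ → E := fun k => ‖x k‖⁻¹ • x k with hu
  have hnx : ∀ k, ‖x k‖ ≠ 0 := fun k => norm_ne_zero_iff.mpr (hx0 k)
  have husphere : ∀ k, u k ∈ Metric.sphere (0:E) 1 := by
    intro k
    simp [hu, norm_smul, inv_mul_cancel₀ (hnx k)]
  obtain ⟨e, hes, φ, hφ, hconv⟩ :=
    (isCompact_sphere (0:E) 1).tendsto_subseq husphere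
  refine ⟨e, by simpa using hes, fun t => ?_⟩
  set r : ℕ → ℝ := fun k => ‖x (φ k)‖ with hr
  have hrpos : ∀ k, 0 < r k := fun k => (hnx (φ k)).lt_of_le' (norm_nonneg _)
  have hrto : Tendsto r atTop (𝓝 0) := by
    refine squeeze_zero (fun k => (hrpos k).le) (fun k => ?_)
      tendsto_one_div_add_atTop_nhds_zero_nat
    refine le_trans (hxs (φ k)).le ?_
    have : (k:ℝ) + 1 ≤ (φ k : ℝ) + 1 := by exact_mod_cast Nat.succ_le_succ hφ.le_apply
    exact one_div_le_one_div_of_le (by positivity) this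
  set c : ℕ → ℝ := fun k => (⌊t / r k⌋ : ℝ) * r k with hcdef
  have hcto : Tendsto c atTop (𝓝 t) := by
    have hlow : Tendsto (fun k => t - r k) atTop (𝓝 t) := by
      simpa using tendsto_const_nhds.sub hrto
    refine tendsto_of_tendsto_of_tendsto_of_le_of_le hlow tendsto_const_nhds
      (fun k => ?_) (fun k => ?_) <;> simp only [hcdef]
    · have h1 : t / r k - 1 < (⌊t / r k⌋ : ℝ) := Int.sub_one_lt_floor _
      have := mul_lt_mul_of_pos_right h1 (hrpos k)
      rw [sub_one_mul, div_mul_cancel₀ _ (hrpos k).ne'] at this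
      linarith
    · have h2 : (⌊t / r k⌋ : ℝ) ≤ t / r k := Int.floor_le _
      have := mul_le_mul_of_nonneg_right h2 (hrpos k).le
      rwa [div_mul_cancel₀ _ (hrpos k).ne'] at this
  have hlim : Tendsto (fun k => c k • u (φ k)) atTop (𝓝 (t • e)) :=
    hcto.smul hconv
  have hmem : ∀ k, c k • u (φ k) ∈ H := by
    intro k
    have : c k • u (φ k) = ⌊t / r k⌋ • x (φ k) := by
      rw [hcdef, hu]
      simp only [smul_smul]
      rw [mul_assoc, mul_inv_cancel₀ (hnx (φ k)), mul_one]
      exact Int.cast_smul_eq_zsmul ℝ _ _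
    rw [this]
    exact zsmul_mem (hxH (φ k)) _
  exact hc.mem_of_tendsto hlim (Eventually.of_forall hmem)

lemma aux_top : ∀ (n : ℕ) (E : Type) [NormedAddCommGroup E] [NormedSpace ℝ E]
    [FiniteDimensional ℝ E], finrank ℝ E = n → ∀ H : AddSubgroup E, IsClosed (H : Set E) →
    (∀ f : E →ₗ[ℝ] ℝ, f ≠ 0 → Dense (f '' (H : Set E))) → ∀ x : E, x ∈ H := by
  intro n
  induction n using Nat.strong_induction_on with
  | _ n ih =>
    intro E _ _ _ hrank H hc hf x
    rcases Nat.eq_zero_or_pos n with hn | hn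
    · have : Subsingleton E := by
        rw [hn] at hrank
        exact finrank_zero_iff.mp hrank
      simpa [Subsingleton.elim x 0] using H.zero_mem
    have : Nontrivial E := by
      apply Module.nontrivial_of_finrank_pos (R := ℝ)
      omega
    by_cases hd : ∀ ε > (0:ℝ), ∃ h ∈ H, h ≠ 0 ∧ ‖h‖ < ε
    · -- non-discrete case: H contains a line
      obtain ⟨e, he1, hline⟩ := aux_line H hc hd
      have hene : e ≠ 0 := by
        intro h; rw [h] at he1; simp at he1
      obtain ⟨g₀, -, hg₀e⟩ := exists_dual_vector ℝ e (norm_ne_zero_iff.mpr hene)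
      -- f₀ e = 1
      set f₀ : E →ₗ[ℝ] ℝ := (‖e‖⁻¹ • g₀ : E →L[ℝ] ℝ).toLinearMap with hf₀def
      have hf₀e : f₀ e = 1 := by
        simp [hf₀def, hg₀e, he1]
      set W : Submodule ℝ E := LinearMap.ker f₀ with hW
      -- the projection onto W along e
      have hπmem : ∀ y : E, y - f₀ y • e ∈ W := by
        intro y
        simp [hW, LinearMap.mem_ker, map_sub, map_smul, hf₀e]
      set π : E →ₗ[ℝ] W := LinearMap.codRestrict W (LinearMap.id - f₀.smulRight e)
        (fun y => by simpa using hπmem y) with hπdef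
      have hπapply : ∀ y : E, (π y : E) = y - f₀ y • e := fun y => rfl
      have hπW : ∀ w : W, π (w : E) = w := by
        intro w
        ext
        rw [hπapply]
        have : f₀ (w : E) = 0 := w.2
        simp [this]
      -- H' = H ∩ W as a subgroup of W
      set H' : AddSubgroup W := AddSubgroup.comap (W.subtype.toAddMonoidHom) H with hH'
      have hH'mem : ∀ w : W, w ∈ H' ↔ (w : E) ∈ H := fun w => Iff.rfl
      have hπH : ∀ h ∈ H, π h ∈ H' := by
        intro h hh
        rw [hH'mem, hπapply]
        exact sub_mem hh (hline (f₀ h))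
      -- rank of W
      have hrankW : finrank ℝ W = n - 1 := by
        have h1 : finrank ℝ (LinearMap.range f₀) + finrank ℝ W = finrank ℝ E :=
          f₀.finrank_range_add_finrank_ker
        have h2 : LinearMap.range f₀ = ⊤ := by
          rw [eq_top_iff]
          rintro c -
          exact ⟨c • e, by simp [map_smul, hf₀e]⟩
        rw [h2, finrank_top, finrank_self] at h1
        omega
      -- closedness of H'
      have hcH' : IsClosed (H' : Set W) := by
        have : (H' : Set W) = (Subtype.val) ⁻¹' (H : Set E) := rfl
        rw [this]
        exact hc.preimage continuous_subtype_val
      -- functional density for H'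
      have hfH' : ∀ g : W →ₗ[ℝ] ℝ, g ≠ 0 → Dense (g '' (H' : Set W)) := by
        intro g hg
        set f : E →ₗ[ℝ] ℝ := g ∘ₗ π with hfdef
        have hfne : f ≠ 0 := by
          obtain ⟨w, hw⟩ := DFunLike.ne_iff.mp hg
          refine DFunLike.ne_iff.mpr ⟨(w : E), ?_⟩
          simpa [hfdef, hπW w] using hw
        refine Dense.mono ?_ (hf f hfne)
        rintro - ⟨h, hh, rfl⟩
        exact ⟨π h, hπH h hh, rfl⟩
      have hIH : ∀ w : W, w ∈ H' :=
        ih (n-1) (by omega) W hrankW H' hcH' hfH'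
      -- conclude
      have hx1 : x - f₀ x • e ∈ H := (hH'mem ⟨_, hπmem x⟩).mp (hIH ⟨_, hπmem x⟩)
      have := add_mem hx1 (hline (f₀ x))
      simpa using this
    · -- discrete case: contradiction
      exfalso
      push_neg at hd
      obtain ⟨ε, hε, hsmall⟩ := hd
      set L : Submodule ℤ E := AddSubgroup.toIntSubmodule H with hL
      have hLcoe : (L : Set E) = (H : Set E) := rfl
      have : DiscreteTopology L := by
        refine DiscreteTopology.of_forall_le_norm (r := ε) hε ?_
        rintro ⟨y, hy⟩ hy0
        exact hsmall y hy (fun h => hy0 (Subtype.ext h))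
      by_cases hV : span ℝ (L : Set E) = ⊤
      · -- H is a full lattice; take a coordinate functional
        have : IsZLattice ℝ L := ⟨hV⟩
        have : Module.Finite ℤ L := ZLattice.module_finite ℝ L
        have : Module.Free ℤ L := ZLattice.module_free ℝ L
        set b := Module.Free.chooseBasis ℤ L with hb
        set B := b.ofZLatticeBasis ℝ L with hB
        obtain ⟨i⟩ := B.index_nonempty
        set f : E →ₗ[ℝ] ℝ := B.coord i with hfdef
        have hfne : f ≠ 0 := by
          refine DFunLike.ne_iff.mpr ⟨B i, ?_⟩
          simp [hfdef]
        have hsub : f '' (H : Set E) ⊆ Set.range ((↑) : ℤ → ℝ) := by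
          rintro - ⟨h, hh, rfl⟩
          refine ⟨b.repr ⟨h, hh⟩ i, ?_⟩
          rw [hfdef, Basis.coord_apply]
          exact (b.ofZLatticeBasis_repr_apply ℝ L ⟨h, hh⟩ i).symm
        have hdense := hf f hfne
        have : (1/2 : ℝ) ∈ closure (f '' (H : Set E)) := hdense _
        have := (Int.isClosedEmbedding_coe_real.isClosed_range.closure_subset_iff.mpr hsub) this
        obtain ⟨k, hk⟩ := this
        have h2 : ((2 * k : ℤ) : ℝ) = ((1 : ℤ) : ℝ) := by push_cast; linarith
        have := Int.cast_injective h2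
        omega
      · -- H spans a proper subspace
        obtain ⟨f, hfne, hfmap⟩ := Submodule.exists_dual_map_eq_bot_of_lt_top
          (lt_top_iff_ne_top.mpr hV) inferInstance
        have hdense := hf f hfne
        have hsub : f '' (H : Set E) ⊆ {0} := by
          rintro - ⟨h, hh, rfl⟩
          have : f h ∈ Submodule.map f (span ℝ (L : Set E)) :=
            ⟨h, subset_span hh, rfl⟩
          rw [hfmap] at this
          simpa using this
        have : (1 : ℝ) ∈ closure (f '' (H : Set E)) := hdense _
        have := (isClosed_singleton.closure_subset_iff.mpr hsub) this
        simp at this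

-- ℚ-linear independence of powers of a transcendental number
lemma aux_indep {α : ℝ} (hα : Transcendental ℚ α) {n : ℕ} (k : Fin n → ℤ) (m : ℤ)
    (hrel : ∑ i, (k i : ℝ) * α ^ ((i : ℕ) + 1) = (m : ℝ)) : ∀ i, k i = 0 := by
  set p : ℚ[X] := (∑ i : Fin n, C (k i : ℚ) * X ^ ((i : ℕ) + 1)) - C (m : ℚ) with hp
  have hev : aeval α p = 0 := by
    rw [hp, map_sub, map_sum, sub_eq_zero]
    simp only [map_mul, map_pow, aeval_C, aeval_X, eq_ratCast, Rat.cast_intCast]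
    exact hrel
  have hp0 : p = 0 := by
    by_contra h
    exact hα ⟨p, h, hev⟩
  intro i
  have hc := congrArg (fun q => coeff q ((i : ℕ) + 1)) hp0
  simp only [hp, coeff_sub, finset_sum_coeff, coeff_C, coeff_zero] at hc
  rw [Finset.sum_eq_single i] at hc
  · simp only [coeff_C_mul, coeff_X_pow, if_pos rfl, mul_one] at hc
    exact_mod_cast by simpa using hc
  · intro j _ hj
    simp only [coeff_C_mul, coeff_X_pow]
    rw [if_neg, mul_zero]
    simp only [Nat.add_right_cancel_iff]
    exact fun h => hj (Fin.ext h.symm)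
  · simp

/-- Proposition 3.4: any basis `(u₁, …, uₙ)` of `ℝⁿ` can be completed by a single
vector `u` so that `ℤu₁ + ⋯ + ℤuₙ + ℤu` is dense in `ℝⁿ`. -/
theorem exists_dense_lattice_add_zmultiples (n : ℕ) (b : Basis (Fin n) ℝ (Fin n → ℝ)) :
    ∃ u : Fin n → ℝ,
      Dense (((⨆ i, AddSubgroup.zmultiples (b i)) ⊔ AddSubgroup.zmultiples u :
        AddSubgroup (Fin n → ℝ)) : Set (Fin n → ℝ)) := by
  set α : ℝ := liouvilleNumber ((3:ℕ):ℝ) with hαdef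
  have hα : Transcendental ℚ α := fun h =>
    transcendental_liouvilleNumber (m := 3) (by norm_num)
      ((IsFractionRing.isAlgebraic_iff ℤ ℚ ℝ).mpr h)
  set u : Fin n → ℝ := ∑ i : Fin n, α ^ ((i : ℕ) + 1) • b i with hu
  refine ⟨u, ?_⟩
  set H : AddSubgroup (Fin n → ℝ) :=
    (⨆ i, AddSubgroup.zmultiples (b i)) ⊔ AddSubgroup.zmultiples u with hH
  have hbH : ∀ i, b i ∈ H := fun i =>
    SetLike.le_def.mp le_sup_left
      (AddSubgroup.mem_iSup_of_mem i (AddSubgroup.mem_zmultiples _))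
  have huH : u ∈ H := SetLike.le_def.mp le_sup_right (AddSubgroup.mem_zmultiples _)
  -- density of images under nonzero functionals
  have key : ∀ f : (Fin n → ℝ) →ₗ[ℝ] ℝ, f ≠ 0 → Dense (f '' (H : Set (Fin n → ℝ))) := by
    intro f hfne
    set G : AddSubgroup ℝ := AddSubgroup.map f.toAddMonoidHom H with hG
    have hGcoe : (G : Set ℝ) = f '' (H : Set (Fin n → ℝ)) := rfl
    rcases AddSubgroup.dense_or_cyclic G with hdense | ⟨a, ha⟩
    · rwa [hGcoe] at hdense
    · exfalso
      rw [← AddSubgroup.zmultiples_eq_closure] at ha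
      have hmem : ∀ y ∈ G, ∃ z : ℤ, y = z • a := by
        intro y hy
        rw [ha] at hy
        obtain ⟨z, hz⟩ := AddSubgroup.mem_zmultiples_iff.mp hy
        exact ⟨z, hz.symm⟩
      have hbG : ∀ i, f (b i) ∈ G := fun i => ⟨b i, hbH i, rfl⟩
      have huG : f u ∈ G := ⟨u, huH, rfl⟩
      choose k hk using fun i => hmem _ (hbG i)
      obtain ⟨m, hm⟩ := hmem _ huG
      rcases eq_or_ne a 0 with ha0 | ha0
      · -- then f kills the basis, so f = 0
        apply hfne
        apply b.ext
        intro i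
        rw [hk i, ha0]
        simp
      · -- a nontrivial ℚ-relation among 1, α, α², …
        have hfu : f u = ∑ i : Fin n, α ^ ((i : ℕ) + 1) * f (b i) := by
          rw [hu]
          simp [map_sum, map_smul, smul_eq_mul]
        rw [hm] at hfu
        have hrel : ∑ i, (k i : ℝ) * α ^ ((i : ℕ) + 1) = (m : ℝ) := by
          have : (m : ℝ) * a = (∑ i : Fin n, (k i : ℝ) * α ^ ((i : ℕ) + 1)) * a := by
            rw [Finset.sum_mul]
            rw [zsmul_eq_mul] at hfu
            rw [hfu]
            refine Finset.sum_congr rfl fun i _ => ?_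
            rw [hk i, zsmul_eq_mul]
            ring
          exact (mul_right_cancel₀ ha0 this.symm)
        have hk0 := aux_indep hα k m hrel
        apply hfne
        apply b.ext
        intro i
        rw [hk i, hk0 i]
        simp
  -- apply the main lemma to the closure of H
  set K := H.topologicalClosure with hK
  have hKmem : ∀ x, x ∈ K := by
    refine aux_top n (Fin n → ℝ) (by simp) K H.isClosed_topologicalClosure ?_
    intro f hfne
    exact (key f hfne).mono (Set.image_mono H.le_topologicalClosure)
  rw [dense_iff_closure_eq]
  have : (K : Set (Fin n → ℝ)) = closure (H : Set (Fin n → ℝ)) := rfl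
  rw [← this]
  exact Set.eq_univ_of_forall hKmem
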